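/- Let f₁, f₂, f₃ be vectors in a real inner product space with f₁ ≠ 0 and f₂ ≠ 0, and let f̃ = f₁ + N₁ f₂ + N₂ f₃ be the null-space-modified force. Then ⟨f₁, N₁ f₂⟩ = 0 and ⟨f₁, N₂ f₃⟩ = 0, hence ⟨f₁, f̃⟩ = ‖f₁‖²; consequently ‖f₁‖ ≤ ‖f̃‖, and in particular f̃ ≠ 0, so the lower-priority terms N₁ f₂ and N₂ f₃ can never cancel the highest-priority force f₁. -/

import Mathlib

open scoped RealInnerProductSpace

/-- Null-space-modified force: the lower-priority terms are orthogonal to the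
highest-priority force `f₁`, hence `⟪f₁, f̃⟫ = ‖f₁‖²`, `‖f₁‖ ≤ ‖f̃‖` and `f̃ ≠ 0`. -/
theorem nullspace_force_no_cancellation
    {E : Type*} [NormedAddCommGroup E] [InnerProductSpace ℝ E]
    (f₁ f₂ f₃ : E) (hf₁ : f₁ ≠ 0) (hf₂ : f₂ ≠ 0)
    (N₁ N₂ : E → E)
    (hN₁ : ∀ x, N₁ x = x - (⟪f₁, x⟫ / ‖f₁‖ ^ 2) • f₁)
    (hN₂ : ∀ x, N₂ x = N₁ (x - (⟪f₂, x⟫ / ‖f₂‖ ^ 2) • f₂))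
    (ft : E) (hft : ft = f₁ + N₁ f₂ + N₂ f₃) :
    ⟪f₁, N₁ f₂⟫ = 0 ∧ ⟪f₁, N₂ f₃⟫ = 0 ∧ ⟪f₁, ft⟫ = ‖f₁‖ ^ 2 ∧
      ‖f₁‖ ≤ ‖ft‖ ∧ ft ≠ 0 := by
  have hn1 : ‖f₁‖ ^ 2 ≠ 0 := by
    simpa using pow_ne_zero 2 (norm_ne_zero_iff.mpr hf₁)
  have key : ∀ x, ⟪f₁, N₁ x⟫ = 0 := by
    intro x
    rw [hN₁]
    rw [inner_sub_right, real_inner_smul_right, real_inner_self_eq_norm_sq]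
    field_simp
    ring
  have h1 : ⟪f₁, N₁ f₂⟫ = 0 := key f₂
  have h2 : ⟪f₁, N₂ f₃⟫ = 0 := by rw [hN₂]; exact key _
  have h3 : ⟪f₁, ft⟫ = ‖f₁‖ ^ 2 := by
    rw [hft, inner_add_right, inner_add_right, h1, h2,
      real_inner_self_eq_norm_sq]
    ring
  refine ⟨h1, h2, h3, ?_, ?_⟩
  · have hcs := real_inner_le_norm f₁ ft
    rw [h3] at hcs
    have hpos : (0:ℝ) < ‖f₁‖ := norm_pos_iff.mpr hf₁
    nlinarith
  · intro h
    rw [h, inner_zero_right] at h3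
    exact hn1 h3.symm
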